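/- Under the corner construction, the central angle of the turning arc equals π − α; that is, the angle ∠ q₁ c q₂ at the center c between the two tangent points equals π − α. (Consequently the arc of the smoothing circle between q₁ and q₂ has length r·(π − α).) -/

import Mathlib

set_option maxHeartbeats 1000000

open InnerProductGeometry Real

local notation "⟪" x ", " y "⟫" => @inner ℝ _ _ x y

lemma aux_norm {E : Type*} [NormedAddCommGroup E] [InnerProductSpace ℝ E]
    (x y : E) (t : ℝ) (hx : ‖x‖ = 1) (hy : ‖y‖ = 1) (ht : ⟪x, y⟫ = t) :
    ‖t • x - y‖ ^ 2 = 1 - t ^ 2 := by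
  rw [norm_sub_sq_real, norm_smul, real_inner_smul_left, ht, hx, hy]
  simp [abs_mul_abs_self]
  ring_nf

lemma aux_inner {E : Type*} [NormedAddCommGroup E] [InnerProductSpace ℝ E]
    (x y : E) (t : ℝ) (hx : ‖x‖ = 1) (hy : ‖y‖ = 1) (ht : ⟪x, y⟫ = t) :
    ⟪t • x - y, t • y - x⟫ = t ^ 3 - t := by
  have ht' : ⟪y, x⟫ = t := by rw [real_inner_comm]; exact ht
  rw [inner_sub_left, inner_sub_right, inner_sub_right, real_inner_smul_left,
    real_inner_smul_left, real_inner_smul_right, real_inner_smul_right,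
    ht, ht', real_inner_self_eq_norm_sq, real_inner_self_eq_norm_sq, hx, hy]
  ring

lemma sq_eq_imp (a b : ℝ) (ha : 0 ≤ a) (hb : 0 ≤ b) (h : a ^ 2 = b ^ 2) : a = b := by
  nlinarith

theorem corner_central_angle_eq_pi_sub
    (p_i p_m p_f : EuclideanSpace ℝ (Fin 2))
    (hpi : p_i ≠ p_m) (hpf : p_f ≠ p_m)
    (hncol : ¬ Collinear ℝ ({p_i, p_m, p_f} : Set (EuclideanSpace ℝ (Fin 2))))
    (α : ℝ) (hα : α = EuclideanGeometry.angle p_i p_m p_f)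
    (hα0 : 0 < α) (hαπ : α < Real.pi)
    (r : ℝ) (hr : 0 < r)
    (u₁ u₂ : EuclideanSpace ℝ (Fin 2))
    (hu₁ : u₁ = ‖p_i - p_m‖⁻¹ • (p_i - p_m))
    (hu₂ : u₂ = ‖p_f - p_m‖⁻¹ • (p_f - p_m))
    (l d : ℝ) (hl : l = r / Real.tan (α / 2)) (hd : d = r / Real.sin (α / 2))
    (b : EuclideanSpace ℝ (Fin 2)) (hb : b = ‖u₁ + u₂‖⁻¹ • (u₁ + u₂))
    (c : EuclideanSpace ℝ (Fin 2)) (hc : c = p_m + d • b)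
    (q₁ q₂ : EuclideanSpace ℝ (Fin 2))
    (hq₁ : q₁ = p_m + l • u₁) (hq₂ : q₂ = p_m + l • u₂) :
    EuclideanGeometry.angle q₁ c q₂ = Real.pi - α := by
  have hs : 0 < Real.sin α := Real.sin_pos_of_pos_of_lt_pi hα0 hαπ
  have hα2 : 0 < α / 2 := by linarith
  have hα2' : α / 2 < Real.pi / 2 := by linarith
  have hcos2 : 0 < Real.cos (α / 2) :=
    Real.cos_pos_of_mem_Ioo ⟨by linarith [Real.pi_pos], hα2'⟩
  have hsin2 : 0 < Real.sin (α / 2) :=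
    Real.sin_pos_of_pos_of_lt_pi hα2 (by linarith [Real.pi_pos])
  have hv : p_i - p_m ≠ 0 := sub_ne_zero.mpr hpi
  have hw : p_f - p_m ≠ 0 := sub_ne_zero.mpr hpf
  have hu1n : ‖u₁‖ = 1 := by rw [hu₁]; exact norm_smul_inv_norm hv
  have hu2n : ‖u₂‖ = 1 := by rw [hu₂]; exact norm_smul_inv_norm hw
  -- inner product of unit vectors is cos α
  have hcosα : ⟪u₁, u₂⟫ = Real.cos α := by
    have h1 : Real.cos α =
        ⟪p_i - p_m, p_f - p_m⟫ / (‖p_i - p_m‖ * ‖p_f - p_m‖) := by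
      rw [hα]
      rw [EuclideanGeometry.angle]
      have : (p_i -ᵥ p_m : EuclideanSpace ℝ (Fin 2)) = p_i - p_m := rfl
      rw [this]
      have : (p_f -ᵥ p_m : EuclideanSpace ℝ (Fin 2)) = p_f - p_m := rfl
      rw [this]
      exact InnerProductGeometry.cos_angle _ _
    rw [hu₁, hu₂, real_inner_smul_left, real_inner_smul_right, h1]
    have h2 : ‖p_i - p_m‖ ≠ 0 := norm_ne_zero_iff.mpr hv
    have h3 : ‖p_f - p_m‖ ≠ 0 := norm_ne_zero_iff.mpr hw
    field_simp
  -- norm of u₁ + u₂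
  have hbn : ‖u₁ + u₂‖ = 2 * Real.cos (α / 2) := by
    have h2 : ‖u₁ + u₂‖ ^ 2 = (2 * Real.cos (α / 2)) ^ 2 := by
      rw [norm_add_sq_real, hu1n, hu2n, hcosα]
      have hhalf : Real.cos (α / 2) ^ 2 = 1 / 2 + Real.cos α / 2 := by
        have := Real.cos_sq (α / 2)
        rw [show 2 * (α / 2) = α by ring] at this
        linarith
      have h4 : (2 * Real.cos (α / 2)) ^ 2 = 4 * Real.cos (α / 2) ^ 2 := by ring
      rw [h4]; linarith
    exact sq_eq_imp _ _ (norm_nonneg _) (by positivity) h2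
  set k : ℝ := r / Real.sin α with hkdef
  have hk : 0 < k := div_pos hr hs
  have hsinα : Real.sin α = 2 * Real.sin (α / 2) * Real.cos (α / 2) := by
    have := Real.sin_two_mul (α / 2)
    rw [show 2 * (α / 2) = α by ring] at this
    linarith
  have hcosα2 : Real.cos α = 2 * Real.cos (α / 2) ^ 2 - 1 := by
    have := Real.cos_sq (α / 2)
    rw [show 2 * (α / 2) = α by ring] at this
    linarith
  have hdk : d * (2 * Real.cos (α / 2))⁻¹ = k := by
    rw [hd, hkdef, hsinα, div_eq_mul_inv, div_eq_mul_inv, mul_assoc, ← mul_inv]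
    ring_nf
  have hlk : l = k * (1 + Real.cos α) := by
    rw [hl, hkdef, Real.tan_eq_sin_div_cos, hsinα, hcosα2]
    field_simp
    ring
  have hq1c : q₁ - c = k • (Real.cos α • u₁ - u₂) := by
    rw [hq₁, hc, hb, hbn, hlk]
    have : d • ((2 * Real.cos (α / 2))⁻¹ • (u₁ + u₂)) = k • (u₁ + u₂) := by
      rw [smul_smul, hdk]
    rw [this]
    module
  have hq2c : q₂ - c = k • (Real.cos α • u₂ - u₁) := by
    rw [hq₂, hc, hb, hbn, hlk]
    have : d • ((2 * Real.cos (α / 2))⁻¹ • (u₁ + u₂)) = k • (u₁ + u₂) := by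
      rw [smul_smul, hdk]
    rw [this]
    module
  have hcosα21 : ⟪u₂, u₁⟫ = Real.cos α := by rw [real_inner_comm]; exact hcosα
  have hn1 : ‖q₁ - c‖ = r := by
    rw [hq1c, norm_smul, Real.norm_eq_abs, abs_of_pos hk]
    have h := aux_norm u₁ u₂ (Real.cos α) hu1n hu2n hcosα
    have hsn : ‖Real.cos α • u₁ - u₂‖ = Real.sin α := by
      have h2 : ‖Real.cos α • u₁ - u₂‖ ^ 2 = Real.sin α ^ 2 := by
        rw [h]; nlinarith [Real.sin_sq_add_cos_sq α]
      exact sq_eq_imp _ _ (norm_nonneg _) (le_of_lt hs) h2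
    rw [hsn, hkdef]
    field_simp
  have hn2 : ‖q₂ - c‖ = r := by
    rw [hq2c, norm_smul, Real.norm_eq_abs, abs_of_pos hk]
    have h := aux_norm u₂ u₁ (Real.cos α) hu2n hu1n hcosα21
    have hsn : ‖Real.cos α • u₂ - u₁‖ = Real.sin α := by
      have h2 : ‖Real.cos α • u₂ - u₁‖ ^ 2 = Real.sin α ^ 2 := by
        rw [h]; nlinarith [Real.sin_sq_add_cos_sq α]
      exact sq_eq_imp _ _ (norm_nonneg _) (le_of_lt hs) h2
    rw [hsn, hkdef]
    field_simp
  have hinner : ⟪q₁ - c, q₂ - c⟫ = -(r ^ 2 * Real.cos α) := by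
    rw [hq1c, hq2c, real_inner_smul_left, real_inner_smul_right,
      aux_inner u₁ u₂ (Real.cos α) hu1n hu2n hcosα]
    have hk2 : k ^ 2 * Real.sin α ^ 2 = r ^ 2 := by
      rw [hkdef]; field_simp
    have hsc : Real.sin α ^ 2 = 1 - Real.cos α ^ 2 := by
      nlinarith [Real.sin_sq_add_cos_sq α]
    have : Real.cos α ^ 3 - Real.cos α = -(Real.cos α * Real.sin α ^ 2) := by
      rw [hsc]; ring
    rw [this]
    have : k * (k * -(Real.cos α * Real.sin α ^ 2)) =
        -((k ^ 2 * Real.sin α ^ 2) * Real.cos α) := by ring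
    rw [this, hk2]
  rw [EuclideanGeometry.angle, vsub_eq_sub, vsub_eq_sub,
    InnerProductGeometry.angle, hinner, hn1, hn2]
  have hr' : r ≠ 0 := ne_of_gt hr
  have : -(r ^ 2 * Real.cos α) / (r * r) = -Real.cos α := by
    field_simp
  rw [this, Real.arccos_neg, Real.arccos_cos (le_of_lt hα0) (le_of_lt hαπ)]
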